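/- In the finite setting (H finite-dimensional, Θ and U finite sets, w : Θ × U → ℝ≥0), there exists a least favorable prior, i.e., a probability distribution π* on Θ achieving max_π min_M Σ_θ R_M(θ) π(θ), where the min is over all POVMs with outcome set U; moreover, every minimax POVM is a Bayes POVM with respect to π*. -/

import Mathlib

open Matrix
open scoped ComplexOrder

variable {n : ℕ} {Θ U : Type*}

/-- A POVM with finite outcome set `U`. -/
def IsPOVM [Fintype U] (M : U → Matrix (Fin n) (Fin n) ℂ) : Prop :=
  (∀ u, (M u).PosSemidef) ∧ ∑ u, M u = 1

/-- The risk of the POVM `M` at parameter `θ`. -/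
noncomputable def risk [Fintype U] (w : Θ → U → ℝ)
    (ρ : Θ → Matrix (Fin n) (Fin n) ℂ) (M : U → Matrix (Fin n) (Fin n) ℂ) (θ : Θ) : ℝ :=
  ∑ u, w θ u * ((ρ θ * M u).trace).re

/-- The Bayes risk of the POVM `M` with respect to the prior `π`. -/
noncomputable def bayesRisk [Fintype Θ] [Fintype U] (w : Θ → U → ℝ)
    (ρ : Θ → Matrix (Fin n) (Fin n) ℂ) (M : U → Matrix (Fin n) (Fin n) ℂ) (π : Θ → ℝ) : ℝ :=
  ∑ θ, risk w ρ M θ * π θ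

lemma auxTraceReNonneg {A B : Matrix (Fin n) (Fin n) ℂ} (hA : A.PosSemidef) (hB : B.PosSemidef) :
    0 ≤ ((A * B).trace).re := by
  open scoped MatrixOrder in
  obtain ⟨S, hS, hSA⟩ : ∃ S : Matrix (Fin n) (Fin n) ℂ, S.PosSemidef ∧ S * S = A :=
    ⟨CFC.sqrt A, (CFC.sqrt_nonneg A).posSemidef, CFC.sqrt_mul_sqrt_self A hA.nonneg⟩
  have h1 : (A * B).trace = (S * B * S).trace := by
    rw [show A * B = S * (S * B) by rw [← mul_assoc, hSA], trace_mul_comm, mul_assoc]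
  have hpsd : (S * B * S).PosSemidef := by
    have := hB.conjTranspose_mul_mul_same S
    rwa [hS.isHermitian.eq] at this
  rw [h1]
  exact (Complex.nonneg_iff.1 hpsd.trace_nonneg).1

lemma auxSmulPsd {A : Matrix (Fin n) (Fin n) ℂ} (hA : A.PosSemidef) {a : ℝ} (ha : 0 ≤ a) :
    (a • A).PosSemidef := by
  exact hA.smul ha

section
variable [Fintype U] {w : Θ → U → ℝ} {ρ : Θ → Matrix (Fin n) (Fin n) ℂ}

lemma auxTraceLeOne (hρ : ∀ θ, (ρ θ).PosSemidef ∧ (ρ θ).trace = 1)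
    {M : U → Matrix (Fin n) (Fin n) ℂ} (hM : IsPOVM M) (θ : Θ) (u : U) :
    ((ρ θ * M u).trace).re ≤ 1 := by
  have hsum : ∑ u', ((ρ θ * M u').trace).re = 1 := by
    have h : ∑ u', (ρ θ * M u') = ρ θ := by rw [← Finset.mul_sum, hM.2, mul_one]
    rw [← Complex.re_sum, ← trace_sum, h, (hρ θ).2, Complex.one_re]
  calc ((ρ θ * M u).trace).re ≤ ∑ u', ((ρ θ * M u').trace).re :=
        Finset.single_le_sum (fun u' _ => auxTraceReNonneg (hρ θ).1 (hM.1 u'))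
          (Finset.mem_univ u)
    _ = 1 := hsum

lemma auxRiskNonneg (hρ : ∀ θ, (ρ θ).PosSemidef ∧ (ρ θ).trace = 1) (hw : ∀ θ u, 0 ≤ w θ u)
    {M : U → Matrix (Fin n) (Fin n) ℂ} (hM : IsPOVM M) (θ : Θ) : 0 ≤ risk w ρ M θ :=
  Finset.sum_nonneg fun u _ => mul_nonneg (hw θ u) (auxTraceReNonneg (hρ θ).1 (hM.1 u))

lemma auxRiskLe (hρ : ∀ θ, (ρ θ).PosSemidef ∧ (ρ θ).trace = 1) (hw : ∀ θ u, 0 ≤ w θ u)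
    {M : U → Matrix (Fin n) (Fin n) ℂ} (hM : IsPOVM M) (θ : Θ) :
    risk w ρ M θ ≤ ∑ u, w θ u := by
  refine Finset.sum_le_sum fun u _ => ?_
  calc w θ u * ((ρ θ * M u).trace).re ≤ w θ u * 1 :=
        mul_le_mul_of_nonneg_left (auxTraceLeOne hρ hM θ u) (hw θ u)
    _ = w θ u := mul_one _

lemma auxUniformPOVM [Nonempty U] :
    IsPOVM (fun _ : U => ((Fintype.card U : ℝ))⁻¹ • (1 : Matrix (Fin n) (Fin n) ℂ)) := by
  constructor
  · intro u
    exact auxSmulPsd Matrix.PosSemidef.one (by positivity)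
  · rw [Finset.sum_const, Finset.card_univ, ← Nat.cast_smul_eq_nsmul ℝ, smul_smul]
    rw [mul_inv_cancel₀ (by exact_mod_cast Fintype.card_ne_zero), one_smul]

lemma auxRiskCombo (M M' : U → Matrix (Fin n) (Fin n) ℂ) (a b : ℝ) (θ : Θ) :
    risk w ρ (fun u => a • M u + b • M' u) θ = a * risk w ρ M θ + b * risk w ρ M' θ := by
  unfold risk
  rw [Finset.mul_sum, Finset.mul_sum, ← Finset.sum_add_distrib]
  refine Finset.sum_congr rfl fun u _ => ?_
  rw [mul_add, Matrix.mul_smul, Matrix.mul_smul, trace_add, trace_smul, trace_smul,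
    Complex.add_re, Complex.smul_re, Complex.smul_re]
  simp only [smul_eq_mul]; ring

lemma auxPOVMCombo {M M' : U → Matrix (Fin n) (Fin n) ℂ} (hM : IsPOVM M) (hM' : IsPOVM M')
    {a b : ℝ} (ha : 0 ≤ a) (hb : 0 ≤ b) (hab : a + b = 1) :
    IsPOVM (fun u => a • M u + b • M' u) := by
  constructor
  · exact fun u => (auxSmulPsd (hM.1 u) ha).add (auxSmulPsd (hM'.1 u) hb)
  · rw [Finset.sum_add_distrib, ← Finset.smul_sum, ← Finset.smul_sum, hM.2, hM'.2, ← add_smul,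
      hab, one_smul]
end

/-- in the finite setting there exists a least favorable prior, and
every minimax POVM is Bayes with respect to it. -/
theorem exists_least_favorable_prior_finite
    [Fintype Θ] [Nonempty Θ] [Fintype U] [Nonempty U]
    (ρ : Θ → Matrix (Fin n) (Fin n) ℂ)
    (hρ : ∀ θ, (ρ θ).PosSemidef ∧ (ρ θ).trace = 1)
    (w : Θ → U → ℝ) (hw : ∀ θ u, 0 ≤ w θ u) :
    ∃ πLF ∈ stdSimplex ℝ Θ,
      (∀ π ∈ stdSimplex ℝ Θ,
        (⨅ M : {M : U → Matrix (Fin n) (Fin n) ℂ // IsPOVM M}, bayesRisk w ρ M.1 π) ≤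
          (⨅ M : {M : U → Matrix (Fin n) (Fin n) ℂ // IsPOVM M}, bayesRisk w ρ M.1 πLF)) ∧
      (∀ M : U → Matrix (Fin n) (Fin n) ℂ, IsPOVM M →
        (∀ M' : U → Matrix (Fin n) (Fin n) ℂ, IsPOVM M' →
            (⨆ θ, risk w ρ M θ) ≤ ⨆ θ, risk w ρ M' θ) →
        (∀ M' : U → Matrix (Fin n) (Fin n) ℂ, IsPOVM M' →
            bayesRisk w ρ M πLF ≤ bayesRisk w ρ M' πLF)) := by
  classical
  haveI : Nonempty {M : U → Matrix (Fin n) (Fin n) ℂ // IsPOVM M} := ⟨⟨_, auxUniformPOVM⟩⟩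
  set B : ℝ := ∑ θ, ∑ u, w θ u with hB
  have hBnn : 0 ≤ B := Finset.sum_nonneg fun θ _ => Finset.sum_nonneg fun u _ => hw θ u
  have hwB : ∀ θ, ∑ u, w θ u ≤ B := fun θ =>
    Finset.single_le_sum (fun θ' _ => Finset.sum_nonneg fun u _ => hw θ' u) (Finset.mem_univ θ)
  have hRB : ∀ {M : U → Matrix (Fin n) (Fin n) ℂ}, IsPOVM M → ∀ θ, risk w ρ M θ ≤ B :=
    fun hM θ => (auxRiskLe hρ hw hM θ).trans (hwB θ)
  -- bayesRisk bounded below for each π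
  have hbayes_lb : ∀ (M : U → Matrix (Fin n) (Fin n) ℂ), IsPOVM M → ∀ π : Θ → ℝ,
      -(B * ∑ θ, |π θ|) ≤ bayesRisk w ρ M π := by
    intro M hM π
    rw [Finset.mul_sum, ← Finset.sum_neg_distrib]
    refine Finset.sum_le_sum fun θ _ => ?_
    have h1 : |risk w ρ M θ * π θ| ≤ B * |π θ| := by
      rw [abs_mul]
      exact mul_le_mul_of_nonneg_right
        (abs_le.2 ⟨by linarith [auxRiskNonneg hρ hw hM θ, hBnn], hRB hM θ⟩) (abs_nonneg _)
    linarith [neg_abs_le (risk w ρ M θ * π θ)]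
  have hbdd : ∀ π : Θ → ℝ,
      BddBelow (Set.range fun M : {M : U → Matrix (Fin n) (Fin n) ℂ // IsPOVM M} =>
        bayesRisk w ρ M.1 π) := by
    intro π
    exact ⟨-(B * ∑ θ, |π θ|), by rintro r ⟨M, rfl⟩; exact hbayes_lb M.1 M.2 π⟩
  set g : (Θ → ℝ) → ℝ :=
    fun π => ⨅ M : {M : U → Matrix (Fin n) (Fin n) ℂ // IsPOVM M}, bayesRisk w ρ M.1 π with hg
  -- Lipschitz-type estimate for g
  have hbayes_diff : ∀ (M : U → Matrix (Fin n) (Fin n) ℂ), IsPOVM M → ∀ π π' : Θ → ℝ,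
      bayesRisk w ρ M π ≤ bayesRisk w ρ M π' + (B * Fintype.card Θ) * dist π π' := by
    intro M hM π π'
    have h : bayesRisk w ρ M π - bayesRisk w ρ M π'
        = ∑ θ, risk w ρ M θ * (π θ - π' θ) := by
      unfold bayesRisk
      rw [← Finset.sum_sub_distrib]
      exact Finset.sum_congr rfl fun θ _ => by ring
    have h2 : ∑ θ, risk w ρ M θ * (π θ - π' θ) ≤ (B * Fintype.card Θ) * dist π π' := by
      calc ∑ θ, risk w ρ M θ * (π θ - π' θ) ≤ ∑ θ : Θ, B * dist π π' := by
            refine Finset.sum_le_sum fun θ _ => ?_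
            have h3 : |π θ - π' θ| ≤ dist π π' := by
              rw [← Real.dist_eq]; exact dist_le_pi_dist π π' θ
            calc risk w ρ M θ * (π θ - π' θ) ≤ |risk w ρ M θ * (π θ - π' θ)| := le_abs_self _
              _ = |risk w ρ M θ| * |π θ - π' θ| := abs_mul _ _
              _ ≤ B * dist π π' := by
                  refine mul_le_mul (abs_le.2 ⟨by linarith [auxRiskNonneg hρ hw hM θ, hBnn], hRB hM θ⟩)
                    h3 (abs_nonneg _) ?_
                  have := auxRiskNonneg hρ hw hM (Classical.arbitrary Θ)
                  linarith [hRB hM (Classical.arbitrary Θ)]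
        _ = (B * Fintype.card Θ) * dist π π' := by
            rw [Finset.sum_const, Finset.card_univ, nsmul_eq_mul]; ring
    linarith
  have hgdiff : ∀ π π' : Θ → ℝ, g π ≤ g π' + (B * Fintype.card Θ) * dist π π' := by
    intro π π'
    have h : ∀ M : {M : U → Matrix (Fin n) (Fin n) ℂ // IsPOVM M},
        g π - (B * Fintype.card Θ) * dist π π' ≤ bayesRisk w ρ M.1 π' := by
      intro M
      have h1 : g π ≤ bayesRisk w ρ M.1 π := ciInf_le (hbdd π) M
      have h2 := hbayes_diff M.1 M.2 π π'
      linarith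
    have := le_ciInf h
    linarith [this]
  have hgcont : Continuous g := by
    have : LipschitzWith (Real.toNNReal (B * Fintype.card Θ)) g := by
      refine LipschitzWith.of_dist_le_mul fun π π' => ?_
      rw [Real.dist_eq]
      have hK : (B * Fintype.card Θ) ≤ (Real.toNNReal (B * Fintype.card Θ) : ℝ) :=
        Real.le_coe_toNNReal _
      have hd : (0:ℝ) ≤ dist π π' := dist_nonneg
      refine abs_sub_le_iff.2 ⟨?_, ?_⟩
      · have := hgdiff π π'; nlinarith
      · have := hgdiff π' π; rw [dist_comm π' π] at this; nlinarith
    exact this.continuous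
  -- maximize g over the simplex
  obtain ⟨πLF, hπLF, hmax⟩ := (isCompact_stdSimplex ℝ Θ).exists_isMaxOn
    ⟨Pi.single (Classical.arbitrary Θ) 1, single_mem_stdSimplex ℝ _⟩ hgcont.continuousOn
  refine ⟨πLF, hπLF, fun π hπ => hmax hπ, ?_⟩
  -- minimax value
  set v : ℝ := ⨅ M : {M : U → Matrix (Fin n) (Fin n) ℂ // IsPOVM M}, ⨆ θ, risk w ρ M.1 θ with hv
  have hsupbdd : ∀ M : U → Matrix (Fin n) (Fin n) ℂ,
      BddAbove (Set.range fun θ => risk w ρ M θ) := fun M => (Set.finite_range _).bddAbove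
  have hvbdd : BddBelow (Set.range fun M : {M : U → Matrix (Fin n) (Fin n) ℂ // IsPOVM M} =>
      ⨆ θ, risk w ρ M.1 θ) := by
    refine ⟨0, ?_⟩
    rintro r ⟨M, rfl⟩
    exact le_ciSup_of_le (hsupbdd M.1) (Classical.arbitrary Θ)
      (auxRiskNonneg hρ hw M.2 _)
  -- the key minimax inequality : v ≤ g πLF
  have hkey : v ≤ g πLF := by
    refine le_of_forall_pos_le_add fun ε hε => ?_
    set S : Set (Θ → ℝ) := {r | ∃ M, IsPOVM M ∧ ∀ θ, risk w ρ M θ ≤ r θ} with hS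
    have hSconv : Convex ℝ S := by
      rintro r ⟨M, hM, hr⟩ r' ⟨M', hM', hr'⟩ a b ha hb hab
      refine ⟨fun u => a • M u + b • M' u, auxPOVMCombo hM hM' ha hb hab, fun θ => ?_⟩
      rw [auxRiskCombo]
      simp only [Pi.add_apply, Pi.smul_apply, smul_eq_mul]
      exact add_le_add (mul_le_mul_of_nonneg_left (hr θ) ha)
        (mul_le_mul_of_nonneg_left (hr' θ) hb)
    have hp_not : (fun _ : Θ => v - ε) ∉ closure S := by
      intro hmem
      rw [Metric.mem_closure_iff] at hmem
      obtain ⟨r, hrS, hdist⟩ := hmem ε hε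
      obtain ⟨M, hM, hr⟩ := hrS
      obtain ⟨θ0, hθ0⟩ := Finite.exists_max (risk w ρ M)
      have h1 : v ≤ risk w ρ M θ0 :=
        (ciInf_le hvbdd ⟨M, hM⟩).trans (ciSup_le hθ0)
      have h2 : ε ≤ dist (fun _ : Θ => v - ε) r := by
        have h3 : dist ((fun _ : Θ => v - ε) θ0) (r θ0) ≤ dist (fun _ : Θ => v - ε) r :=
          dist_le_pi_dist (fun _ : Θ => v - ε) r θ0
        rw [Real.dist_eq] at h3
        have h4 : ε ≤ |v - ε - r θ0| := by
          have h5 : v ≤ r θ0 := h1.trans (hr θ0)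
          rw [abs_sub_comm, abs_of_nonneg (by linarith)]
          linarith
        exact h4.trans h3
      linarith
    obtain ⟨f, t, hft, hfS⟩ :=
      geometric_hahn_banach_point_closed hSconv.closure isClosed_closure hp_not
    have hfS' : ∀ r ∈ S, t < f r := fun r hr => hfS r (subset_closure hr)
    set M0 : U → Matrix (Fin n) (Fin n) ℂ :=
      fun _ => ((Fintype.card U : ℝ))⁻¹ • (1 : Matrix (Fin n) (Fin n) ℂ) with hM0
    have hr0 : risk w ρ M0 ∈ S := ⟨M0, auxUniformPOVM, fun θ => le_refl _⟩
    set c : Θ → ℝ := fun θ => f (Pi.single θ 1) with hc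
    have hS_up : ∀ r ∈ S, ∀ (θ : Θ) (s : ℝ), 0 ≤ s → r + s • (Pi.single θ 1 : Θ → ℝ) ∈ S := by
      rintro r ⟨M, hM, hr⟩ θ s hs
      refine ⟨M, hM, fun θ' => ?_⟩
      have hnn : (0:ℝ) ≤ (s • (Pi.single θ 1 : Θ → ℝ)) θ' := by
        by_cases h : θ' = θ <;> simp [Pi.single_apply, h, hs]
      calc risk w ρ M θ' ≤ r θ' := hr θ'
        _ ≤ r θ' + (s • (Pi.single θ 1 : Θ → ℝ)) θ' := by linarith
        _ = (r + s • (Pi.single θ 1 : Θ → ℝ)) θ' := rfl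
    have hcnn : ∀ θ, 0 ≤ c θ := by
      intro θ
      by_contra hneg
      push_neg at hneg
      set s : ℝ := (t - f (risk w ρ M0) - 1) / c θ with hs
      have hfr0 : t < f (risk w ρ M0) := hfS' _ hr0
      have hspos : 0 < s := div_pos_iff.2 (Or.inr ⟨by linarith, hneg⟩)
      have hmem := hfS' _ (hS_up _ hr0 θ s hspos.le)
      rw [map_add, _root_.map_smul, smul_eq_mul] at hmem
      have hcθ : f (Pi.single θ 1) = c θ := rfl
      rw [hcθ] at hmem
      have : s * c θ = t - f (risk w ρ M0) - 1 := div_mul_cancel₀ _ hneg.ne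
      linarith
    have hfx : ∀ x : Θ → ℝ, f x = ∑ θ, x θ * c θ := by
      intro x
      have hx : x = ∑ θ, x θ • (Pi.single θ 1 : Θ → ℝ) := by
        funext j
        simp [Pi.single_apply, Finset.sum_apply]
      conv_lhs => rw [hx]
      rw [map_sum]
      exact Finset.sum_congr rfl fun θ _ => by rw [_root_.map_smul, smul_eq_mul]
    have hcsum : 0 < ∑ θ, c θ := by
      rcases (Finset.sum_nonneg fun θ _ => hcnn θ).eq_or_lt with h | h
      · exfalso
        have hall : ∀ θ ∈ Finset.univ, c θ = 0 :=
          (Finset.sum_eq_zero_iff_of_nonneg fun θ _ => hcnn θ).1 h.symm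
        have h1 : f (fun _ : Θ => v - ε) = 0 := by
          rw [hfx]; exact Finset.sum_eq_zero fun θ _ => by rw [hall θ (Finset.mem_univ θ), mul_zero]
        have h2 : f (risk w ρ M0) = 0 := by
          rw [hfx]; exact Finset.sum_eq_zero fun θ _ => by rw [hall θ (Finset.mem_univ θ), mul_zero]
        have := hfS' _ hr0
        linarith
      · exact h
    set π : Θ → ℝ := fun θ => c θ / ∑ θ', c θ' with hπdef
    have hπmem : π ∈ stdSimplex ℝ Θ := by
      constructor
      · exact fun θ => div_nonneg (hcnn θ) hcsum.le
      · rw [← Finset.sum_div, div_self hcsum.ne']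
    have hgπ : v - ε ≤ g π := by
      rw [hg]
      refine le_ciInf fun M => ?_
      have h1 : t < f (risk w ρ M.1) := hfS' _ ⟨M.1, M.2, fun θ => le_refl _⟩
      have h2 : f (fun _ : Θ => v - ε) = (v - ε) * ∑ θ, c θ := by
        rw [hfx, Finset.mul_sum]
      have h3 : (v - ε) * ∑ θ, c θ < ∑ θ, risk w ρ M.1 θ * c θ := by
        rw [← h2, ← hfx]
        exact hft.trans h1
      have h4 : bayesRisk w ρ M.1 π = (∑ θ, risk w ρ M.1 θ * c θ) / ∑ θ, c θ := by
        unfold bayesRisk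
        rw [Finset.sum_div]
        exact Finset.sum_congr rfl fun θ _ => by rw [hπdef, mul_div_assoc]
      rw [h4, le_div_iff₀ hcsum]
      linarith
    have hmono : g π ≤ g πLF := hmax hπmem
    linarith [hgπ, hmono]
  -- final assembly
  intro M hM hminimax M' hM'
  have h1 : bayesRisk w ρ M πLF ≤ ⨆ θ, risk w ρ M θ := by
    unfold bayesRisk
    calc ∑ θ, risk w ρ M θ * πLF θ ≤ ∑ θ, (⨆ θ', risk w ρ M θ') * πLF θ :=
          Finset.sum_le_sum fun θ _ =>
            mul_le_mul_of_nonneg_right (le_ciSup (hsupbdd M) θ) (hπLF.1 θ)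
      _ = (⨆ θ', risk w ρ M θ') * ∑ θ, πLF θ := by rw [← Finset.mul_sum]
      _ = ⨆ θ', risk w ρ M θ' := by rw [hπLF.2, mul_one]
  have h2 : (⨆ θ, risk w ρ M θ) ≤ v := le_ciInf fun M'' => hminimax M''.1 M''.2
  have h4 : g πLF ≤ bayesRisk w ρ M' πLF := ciInf_le (hbdd πLF) ⟨M', hM'⟩
  linarith
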